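/- Let G be a group and let 𝒜 be the free abelian group on symbols ×_{g,h} for g,h ∈ G with g ≠ 1 and h ≠ 1 (setting ×_{1,g} = ×_{g,1} = 0). Then the formula g · ×_{h,k} = ×_{gh,k} − ×_{g,hk} + ×_{g,h} defines an action of G on 𝒜 by group automorphisms. -/

import Mathlib

/-- The free abelian group on symbols `×_{g,h}` with `g ≠ 1` and `h ≠ 1`. -/
def Asymb (G : Type*) [Group G] : Type _ :=
  ({p : G × G // p.1 ≠ 1 ∧ p.2 ≠ 1} →₀ ℤ)

noncomputable instance {G : Type*} [Group G] : AddCommGroup (Asymb G) :=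
  inferInstanceAs (AddCommGroup ({p : G × G // p.1 ≠ 1 ∧ p.2 ≠ 1} →₀ ℤ))

/-- The symbol `×_{g,h}`, set equal to `0` whenever `g = 1` or `h = 1`. -/
noncomputable def X {G : Type*} [Group G] [DecidableEq G] (g h : G) : Asymb G :=
  if hp : g ≠ 1 ∧ h ≠ 1 then Finsupp.single ⟨(g, h), hp⟩ 1 else 0

/-- The `ℤ`-linear endomorphism of `Asymb G` induced by the formula
`g · ×_{h,k} = ×_{gh,k} − ×_{g,hk} + ×_{g,h}`. -/
noncomputable def actHom {G : Type*} [Group G] [DecidableEq G] (g : G) :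
    Asymb G →ₗ[ℤ] Asymb G :=
  Finsupp.lift (Asymb G) ℤ {p : G × G // p.1 ≠ 1 ∧ p.2 ≠ 1} fun p =>
    X (g * p.1.1) p.1.2 - X g (p.1.1 * p.1.2) + X g p.1.1


section Aux
variable {G : Type*} [Group G] [DecidableEq G]

lemma actHom_X (g h k : G) :
    actHom g (X h k) = X (g * h) k - X g (h * k) + X g h := by
  by_cases hp : h ≠ 1 ∧ k ≠ 1
  · rw [show X h k = (Finsupp.single ⟨(h, k), hp⟩ 1 : Asymb G) from dif_pos hp]
    erw [Finsupp.lift_apply, Finsupp.sum_single_index] <;> simp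
  · push_neg at hp
    rcases eq_or_ne h 1 with rfl | hh
    · have : X (1 : G) k = 0 := by simp [X]
      rw [this, map_zero]
      have h1 : X g (1 : G) = 0 := by simp [X]
      simp [h1]
    · have hk : k = 1 := hp hh
      subst hk
      have : X h (1 : G) = 0 := by simp [X]
      rw [this, map_zero]
      have h1 : X (g * h) (1 : G) = 0 := by simp [X]
      simp [h1]

lemma single_eq_X (a b : G) (ha : a ≠ 1) (hb : b ≠ 1) :
    (Finsupp.single ⟨(a, b), ha, hb⟩ 1 : Asymb G) = X a b := by
  simp [X, ha, hb]

lemma actHom_one : actHom (1 : G) = LinearMap.id := by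
  apply Finsupp.lhom_ext'
  rintro ⟨⟨a, b⟩, ha, hb⟩
  apply LinearMap.ext_ring
  show actHom (1 : G) (Finsupp.single _ 1) = LinearMap.id (R := ℤ) (Finsupp.single _ 1)
  rw [single_eq_X a b ha hb, actHom_X]
  have h1 : X (1 : G) (a * b) = 0 := by simp [X]
  have h2 : X (1 : G) a = 0 := by simp [X]
  simp [h1, h2, single_eq_X a b ha hb]
  rfl

lemma actHom_mul (g h : G) : actHom (g * h) = (actHom g).comp (actHom h) := by
  apply Finsupp.lhom_ext'
  rintro ⟨⟨a, b⟩, ha, hb⟩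
  apply LinearMap.ext_ring
  show actHom (g * h) (Finsupp.single _ 1) = actHom g (actHom h (Finsupp.single _ 1))
  rw [single_eq_X a b ha hb, actHom_X, actHom_X, map_add, map_sub,
    actHom_X, actHom_X, actHom_X]
  simp only [mul_assoc]
  abel

end Aux

/-- the formula `g · ×_{h,k} = ×_{gh,k} − ×_{g,hk} + ×_{g,h}` (extended
`ℤ`-linearly) defines an action of `G` on `𝒜` by additive automorphisms, i.e. there is a
group homomorphism `ρ : G →* AddAut 𝒜` realizing the formula on the generators. -/
theorem stmt5 {G : Type*} [Group G] [DecidableEq G] :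
    ∃ ρ : G →* Multiplicative (AddAut (Asymb G)),
      ∀ g h k : G, Multiplicative.toAdd (ρ g) (X h k) = X (g * h) k - X g (h * k) + X g h := by
  have key : ∀ (g : G) (x : Asymb G), actHom g (actHom g⁻¹ x) = x := by
    intro g x
    have := congrArg (fun f => (f : Asymb G →ₗ[ℤ] Asymb G) x) (actHom_mul g g⁻¹)
    simp only [mul_inv_cancel, actHom_one, LinearMap.id_apply, LinearMap.comp_apply] at this
    exact this.symm
  have key' : ∀ (g : G) (x : Asymb G), actHom g⁻¹ (actHom g x) = x := by
    intro g x
    have := congrArg (fun f => (f : Asymb G →ₗ[ℤ] Asymb G) x) (actHom_mul g⁻¹ g)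
    simp only [inv_mul_cancel, actHom_one, LinearMap.id_apply, LinearMap.comp_apply] at this
    exact this.symm
  refine ⟨{
    toFun := fun g => Multiplicative.ofAdd {
      toFun := actHom g
      invFun := actHom g⁻¹
      left_inv := key' g
      right_inv := key g
      map_add' := (actHom g).map_add }
    map_one' := by
      apply Multiplicative.toAdd.injective
      ext x
      simp [actHom_one]
    map_mul' := by
      intro g h
      apply Multiplicative.toAdd.injective
      ext x
      simp [actHom_mul g h] }, fun g h k => actHom_X g h k⟩
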